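/- The set {(t_1,...,t_n) ∈ ℝⁿ : t_1 + ... + t_n = 0 and t_1 ≤ t_2 ≤ ... ≤ t_n ≤ t_1 + 1} is a fundamental domain for the action of Δ_ℤ ⋊ Σ_n on Δ_ℝ, in the sense that every point of Δ_ℝ = {t ∈ ℝⁿ : Σ t_i = 0} lies in the orbit of some point of this set under the group generated by permutations of coordinates and translations by integer vectors summing to zero. -/

import Mathlib

private lemma morton_aux_count (N M : ℕ) (h : M ≤ N) :
    ∑ i : Fin N, (if (i:ℕ) < M then (1:ℝ) else 0) = M := by
  rw [Fin.sum_univ_eq_sum_range (fun i => if i < M then (1:ℝ) else 0) N]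
  rw [← Finset.sum_subset (Finset.range_subset_range.mpr h)
      (fun x _ hx => if_neg (by simpa using hx))]
  rw [Finset.sum_congr rfl (fun x hx => if_pos (Finset.mem_range.mp hx))]
  simp

/-- Morton's fundamental domain: every point of
`Δ_ℝ = {t : Σ t i = 0}` is carried, by a permutation of coordinates followed
by a translation by an integer vector with zero sum (an element of `Δ_ℤ`),
into the region `{t ∈ Δ_ℝ : t 0 ≤ t 1 ≤ ⋯ ≤ t (n-1) ≤ t 0 + 1}`. -/
theorem morton_fundamental_domain (n : ℕ) (t : Fin (n + 1) → ℝ)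
    (ht : ∑ i, t i = 0) :
    ∃ (σ : Equiv.Perm (Fin (n + 1))) (v : Fin (n + 1) → ℤ),
      (∑ i, (v i : ℝ)) = 0 ∧
      (∑ i, (t (σ i) + (v i : ℝ))) = 0 ∧
      (∀ i j : Fin (n + 1), i ≤ j → t (σ i) + (v i : ℝ) ≤ t (σ j) + (v j : ℝ)) ∧
      t (σ (Fin.last n)) + (v (Fin.last n) : ℝ) ≤ t (σ 0) + (v 0 : ℝ) + 1 := by
  set f : Fin (n+1) → ℝ := fun i => Int.fract (t i) with hf
  set τ : Equiv.Perm (Fin (n+1)) := Tuple.sort f with hτ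
  have hg : Monotone (f ∘ τ) := Tuple.monotone_sort f
  set mZ : ℤ := -∑ i, ⌊t i⌋ with hm
  have hsumf : ∑ i, f i = (mZ : ℝ) := by
    simp only [hf, Int.fract]
    rw [Finset.sum_sub_distrib, ht, hm]
    push_cast
    ring
  have hf0 : ∀ i, 0 ≤ f i := fun i => Int.fract_nonneg _
  have hf1 : ∀ i, f i < 1 := fun i => Int.fract_lt_one _
  have hm0 : 0 ≤ mZ := by
    have : (0:ℝ) ≤ (mZ : ℝ) := hsumf ▸ Finset.sum_nonneg fun i _ => hf0 i
    exact_mod_cast this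
  have hmlt : mZ < (n+1 : ℕ) := by
    have h1 : ∑ i, f i < ∑ _i : Fin (n+1), (1:ℝ) :=
      Finset.sum_lt_sum_of_nonempty (by simp) fun i _ => hf1 i
    rw [hsumf] at h1
    simp at h1
    exact_mod_cast h1
  set M : ℕ := mZ.toNat with hM
  have hMn : M ≤ n := by omega
  have hMZ : (M : ℤ) = mZ := Int.toNat_of_nonneg hm0
  set ρ : Equiv.Perm (Fin (n+1)) := Equiv.addRight (Fin.ofNat (n+1) (n+1-M)) with hρ
  have hρval : ∀ i : Fin (n+1), (ρ i : ℕ) = ((i : ℕ) + (n+1-M)) % (n+1) := by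
    intro i
    simp only [hρ, Equiv.coe_addRight, Fin.add_def, Fin.val_ofNat]
    conv_rhs => rw [Nat.add_mod]
    conv_lhs => rw [Nat.add_mod]
    simp [Nat.mod_mod]
  have hltval : ∀ i : Fin (n+1), (i:ℕ) < M → (ρ i : ℕ) = (i:ℕ) + (n+1) - M := by
    intro i hi
    rw [hρval, Nat.mod_eq_of_lt (by omega)]
    omega
  have hgeval : ∀ i : Fin (n+1), M ≤ (i:ℕ) → (ρ i : ℕ) = (i:ℕ) - M := by
    intro i hi
    have hiN := i.isLt
    rw [hρval, show (i:ℕ) + (n+1-M) = ((i:ℕ) - M) + (n+1) by omega,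
      Nat.add_mod_right, Nat.mod_eq_of_lt (by omega)]
  set σ : Equiv.Perm (Fin (n+1)) := ρ.trans τ with hσ
  set v : Fin (n+1) → ℤ := fun i => -⌊t (σ i)⌋ - (if (i:ℕ) < M then 1 else 0) with hv
  have hs : ∀ i, t (σ i) + (v i : ℝ)
      = (f ∘ τ) (ρ i) - (if (i:ℕ) < M then (1:ℝ) else 0) := by
    intro i
    simp only [hv, hσ, Equiv.trans_apply, hf, Function.comp_apply, Int.fract]
    split <;> push_cast <;> ring
  have hvsum : ∑ i, (v i : ℝ) = 0 := by
    have h1 : ∑ i, ((⌊t (σ i)⌋ : ℝ)) = ∑ i, ((⌊t i⌋ : ℝ)) :=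
      Equiv.sum_comp σ fun j => ((⌊t j⌋ : ℝ))
    have h2 := morton_aux_count (n+1) M (by omega)
    have h3 : ∑ i, (v i : ℝ)
        = ∑ i, (-(⌊t (σ i)⌋ : ℝ) - (if (i:ℕ) < M then (1:ℝ) else 0)) := by
      refine Finset.sum_congr rfl fun i _ => ?_
      simp only [hv]
      split <;> push_cast <;> ring
    rw [h3, Finset.sum_sub_distrib, h2, Finset.sum_neg_distrib, h1]
    have : ∑ i, ((⌊t i⌋ : ℝ)) = -(M : ℝ) := by
      have : ((∑ i, ⌊t i⌋ : ℤ) : ℝ) = ((-mZ : ℤ) : ℝ) := by rw [hm]; push_cast; ring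
      push_cast at this
      rw [this, ← hMZ]
      push_cast
      ring
    rw [this]
    ring
  refine ⟨σ, v, hvsum, ?_, ?_, ?_⟩
  · rw [Finset.sum_add_distrib, hvsum, Equiv.sum_comp σ t, ht]
    ring
  · intro i j hij
    have hij' : (i:ℕ) ≤ (j:ℕ) := hij
    rw [hs i, hs j]
    rcases Nat.lt_or_ge (j:ℕ) M with hj | hj
    · have hi : (i:ℕ) < M := by omega
      rw [if_pos hi, if_pos hj]
      have : ρ i ≤ ρ j := by
        rw [Fin.le_def, hltval i hi, hltval j hj]; omega
      linarith [hg this]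
    · rcases Nat.lt_or_ge (i:ℕ) M with hi | hi
      · rw [if_pos hi, if_neg (by omega)]
        have h1 : (f ∘ τ) (ρ i) < 1 := hf1 (τ (ρ i))
        have h2 : 0 ≤ (f ∘ τ) (ρ j) := hf0 (τ (ρ j))
        simp only [Function.comp_apply] at *
        linarith
      · rw [if_neg (by omega), if_neg (by omega)]
        have : ρ i ≤ ρ j := by
          rw [Fin.le_def, hgeval i hi, hgeval j hj]; omega
        linarith [hg this]
  · rw [hs, hs]
    rcases Nat.eq_zero_or_pos M with hM0 | hM1
    · rw [if_neg (by omega), if_neg (by omega)]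
      have h1 : (f ∘ τ) (ρ (Fin.last n)) < 1 := hf1 _
      have h2 : 0 ≤ (f ∘ τ) (ρ 0) := hf0 _
      linarith
    · have hlast : ((Fin.last n : Fin (n+1)) : ℕ) = n := rfl
      have h0 : ((0 : Fin (n+1)) : ℕ) = 0 := rfl
      rw [if_neg (by omega), if_pos (by omega)]
      have : ρ (Fin.last n) ≤ ρ 0 := by
        rw [Fin.le_def, hgeval (Fin.last n) (by omega), hltval 0 (by omega)]
        simp only [hlast, h0]
        omega
      linarith [hg this]
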